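/- arXiv:1804.11215 — 4 statements merged into one kernel-verified Lean document; each statement's English description precedes it below -/
import Mathlib

section
/- Let n ≥ 1, r > 0, R > 0, M > 0, and let t_1,…,t_n, s_1,…,s_n ∈ ℂ with |t_i| ≤ R and |t_i − s_i| ≤ r ≤ M for all i. Let e_k denote the k-th elementary symmetric polynomial in n variables. Then for each k ∈ {1,…,n}, |e_k(t_1,…,t_n) − e_k(s_1,…,s_n)| ≤ D_k·r, where D_k = C(n,k)·(R^(k−1) + (M+R)·C_{k−1}), C_1 = 1, C_j = R^(j−1) + (M+R)·C_{j−1}, and D_1 = n. -/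
open Finset

theorem esymm_difference_bound (n : ℕ) (hn : 1 ≤ n) (r R M : ℝ)
    (hr : 0 < r) (hR : 0 < R) (hM : 0 < M) (hrM : r ≤ M)
    (t s : Fin n → ℂ) (ht : ∀ i, ‖t i‖ ≤ R)
    (hts : ∀ i, ‖t i - s i‖ ≤ r)
    (C : ℕ → ℝ) (hC1 : C 1 = 1)
    (hCj : ∀ j, 2 ≤ j → C j = R ^ (j - 1) + (M + R) * C (j - 1))
    (D : ℕ → ℝ) (hD1 : D 1 = n)
    (hDk : ∀ k, 2 ≤ k → D k = (n.choose k : ℝ) * (R ^ (k - 1) + (M + R) * C (k - 1))) :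
    ∀ k : ℕ, 1 ≤ k → k ≤ n →
      ‖(∑ A ∈ Finset.univ.powersetCard k, ∏ i ∈ A, t i) -
          ∑ A ∈ Finset.univ.powersetCard k, ∏ i ∈ A, s i‖ ≤ D k * r := by
  have hs : ∀ i, ‖s i‖ ≤ M + R := by
    intro i
    calc ‖s i‖ = ‖(s i - t i) + t i‖ := by ring_nf
    _ ≤ ‖s i - t i‖ + ‖t i‖ := norm_add_le _ _
    _ = ‖t i - s i‖ + ‖t i‖ := by rw [norm_sub_rev]
    _ ≤ r + R := add_le_add (hts i) (ht i)
    _ ≤ M + R := by linarith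
  have hprodT : ∀ (A : Finset (Fin n)), ‖∏ i ∈ A, t i‖ ≤ R ^ A.card := by
    intro A
    rw [norm_prod]
    calc (∏ i ∈ A, ‖t i‖) ≤ ∏ i ∈ A, R :=
      Finset.prod_le_prod (fun i _ => (norm_nonneg _)) (fun i _ => ht i)
    _ = R ^ A.card := by rw [Finset.prod_const]
  have aux : ∀ k, 1 ≤ k → ∀ A : Finset (Fin n), A.card = k →
      ‖(∏ i ∈ A, t i) - ∏ i ∈ A, s i‖ ≤ C k * r := by
    intro k
    induction k with
    | zero => omega
    | succ k ih =>
      intro _ A hA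
      rcases Nat.eq_zero_or_pos k with hk0 | hk1
      · subst hk0
        obtain ⟨i, rfl⟩ := Finset.card_eq_one.mp hA
        simp [hC1, hts i]
      · obtain ⟨i, hiA⟩ := Finset.card_pos.mp (by omega : 0 < A.card)
        have hA' : (A.erase i).card = k := by
          rw [Finset.card_erase_of_mem hiA, hA]
          omega
        have key : (∏ j ∈ A, t j) - ∏ j ∈ A, s j
            = (t i - s i) * (∏ j ∈ A.erase i, t j)
              + s i * ((∏ j ∈ A.erase i, t j) - ∏ j ∈ A.erase i, s j) := by
          rw [← Finset.mul_prod_erase A t hiA, ← Finset.mul_prod_erase A s hiA]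
          ring
        rw [key]
        have h1 : ‖(t i - s i) * (∏ j ∈ A.erase i, t j)‖ ≤ r * R ^ k := by
          rw [norm_mul]
          exact mul_le_mul (hts i) (by simpa [hA'] using hprodT (A.erase i))
            (norm_nonneg _) hr.le
        have h2 : ‖s i * ((∏ j ∈ A.erase i, t j) - ∏ j ∈ A.erase i, s j)‖
            ≤ (M + R) * (C k * r) := by
          rw [norm_mul]
          exact mul_le_mul (hs i) (ih hk1 (A.erase i) hA') (norm_nonneg _)
            (by linarith)
        have hCk : C (k + 1) = R ^ k + (M + R) * C k := by
          have := hCj (k + 1) (by omega)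
          simpa using this
        calc ‖_‖ ≤ _ + _ := norm_add_le _ _
        _ ≤ r * R ^ k + (M + R) * (C k * r) := add_le_add h1 h2
        _ = (R ^ k + (M + R) * C k) * r := by ring
        _ = C (k + 1) * r := by rw [hCk]
  intro k hk1 hkn
  have hcard : (Finset.univ.powersetCard k : Finset (Finset (Fin n))).card = n.choose k := by
    simp [Finset.card_powersetCard]
  have step : ‖(∑ A ∈ Finset.univ.powersetCard k, ∏ i ∈ A, t i) -
          ∑ A ∈ Finset.univ.powersetCard k, ∏ i ∈ A, s i‖
      ≤ (n.choose k : ℝ) * (C k * r) := by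
    rw [← Finset.sum_sub_distrib]
    calc ‖∑ A ∈ Finset.univ.powersetCard k, ((∏ i ∈ A, t i) - ∏ i ∈ A, s i)‖
        ≤ ∑ A ∈ Finset.univ.powersetCard k,
            ‖(∏ i ∈ A, t i) - ∏ i ∈ A, s i‖ := by
          exact norm_sum_le _ _
    _ ≤ ∑ A ∈ Finset.univ.powersetCard k, C k * r := by
        refine Finset.sum_le_sum fun A hA => aux k hk1 A ?_
        simpa using (Finset.mem_powersetCard.mp hA).2
    _ = (n.choose k : ℝ) * (C k * r) := by
        rw [Finset.sum_const, hcard, nsmul_eq_mul]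
  rcases Nat.eq_or_lt_of_le hk1 with hk | hk
  · subst hk
    rw [hD1, hC1] at *
    calc _ ≤ (n.choose 1 : ℝ) * (1 * r) := step
    _ = (n : ℝ) * r := by simp
  · have hDkk : D k = (n.choose k : ℝ) * C k := by
      rw [hDk k hk]
      have : C k = R ^ (k - 1) + (M + R) * C (k - 1) := hCj k hk
      rw [this]
    rw [hDkk, mul_assoc]
    exact step
end

section
/- There exist a continuous function f : [0,1] → ℝ and continuous functions f_k : [0,1] → ℝ (k ≥ 1) such that d_H(graph(f_k), graph(f)) ≤ 1/2^k for all k, yet ‖f − f_k‖_∞ = 1/(2k²) for all k; in particular limsup_k (d_H(graph(f_k), graph(f)))^(1/k) < 1 while limsup_k (‖f − f_k‖_∞)^(1/k) = 1. -/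
open Metric Set Filter Topology

noncomputable section HGexample

/-- height of tent `k` -/
def hgA (k : ℕ) : ℝ := 1 / (2 * (k : ℝ) ^ 2)

/-- basic dyadic scale: `hgE k = 2⁻ᵏ` -/
def hgE (k : ℕ) : ℝ := (1/2 : ℝ) ^ k

/-- tent `k`: peak `hgA k` at `6 * hgE (k+2)`, half-width `hgE (k+2)`. -/
def hgT (k : ℕ) (x : ℝ) : ℝ := max 0 (hgA k * (1 - |x - 6 * hgE (k+2)| / hgE (k+2)))

def hgF : ℝ → ℝ := fun x => ∑' n : ℕ, hgT (n+1) x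

lemma hgE_pos (k : ℕ) : 0 < hgE k := by unfold hgE; positivity
lemma hgA_nonneg (k : ℕ) : 0 ≤ hgA k := by unfold hgA; positivity
lemma hgE2 (k : ℕ) : hgE (k+1) * 2 = hgE k := by rw [hgE, hgE, pow_succ]; ring
lemma hgE4 (k : ℕ) : hgE (k+2) * 4 = hgE k := by rw [hgE, hgE, pow_succ, pow_succ]; ring
lemma hgE8 (k : ℕ) : hgE (k+3) * 8 = hgE k := by rw [hgE, hgE, pow_succ, pow_succ, pow_succ]; ring
lemma hgE_antitone : ∀ {j k : ℕ}, j ≤ k → hgE k ≤ hgE j := by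
  intro j k h
  exact pow_le_pow_of_le_one (by norm_num) (by norm_num) h
lemma hgA_antitone {j k : ℕ} (hj : 1 ≤ j) (h : j ≤ k) : hgA k ≤ hgA j := by
  unfold hgA
  have hj' : (1:ℝ) ≤ (j:ℝ) := by exact_mod_cast hj
  have h' : (j:ℝ) ≤ (k:ℝ) := by exact_mod_cast h
  apply one_div_le_one_div_of_le (by nlinarith) (by nlinarith)

lemma hgT_nonneg (k : ℕ) (x : ℝ) : 0 ≤ hgT k x := le_max_left _ _

lemma hgT_le (k : ℕ) (x : ℝ) : hgT k x ≤ hgA k := by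
  apply max_le (hgA_nonneg k)
  have h1 : 0 ≤ |x - 6 * hgE (k+2)| / hgE (k+2) := div_nonneg (abs_nonneg _) (hgE_pos _).le
  nlinarith [hgA_nonneg k]

lemma hgT_cont (k : ℕ) : Continuous (hgT k) := by
  apply continuous_const.max
  fun_prop

lemma hgT_eq_zero (k : ℕ) {x : ℝ} (h : hgE (k+2) ≤ |x - 6 * hgE (k+2)|) : hgT k x = 0 := by
  apply max_eq_left
  have h2 : (1:ℝ) ≤ |x - 6 * hgE (k+2)| / hgE (k+2) :=
    (le_div_iff₀ (hgE_pos _)).2 (by linarith)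
  nlinarith [hgA_nonneg k]

/-- value at the peak -/
lemma hgT_peak (k : ℕ) : hgT k (6 * hgE (k+2)) = hgA k := by
  unfold hgT
  simp [hgA_nonneg k]

lemma hgSummable : Summable (fun n : ℕ => hgA (n+1)) := by
  have : Summable (fun n : ℕ => 1 / ((n:ℝ)+1) ^ 2) := by
    have := (summable_nat_add_iff (f := fun n : ℕ => 1 / (n:ℝ) ^ 2) 1).2
      (Real.summable_one_div_nat_pow.2 one_lt_two)
    simpa using this
  apply Summable.of_nonneg_of_le (fun n => hgA_nonneg _) (fun n => ?_) this
  simp only [hgA]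
  rw [div_le_div_iff₀ (by positivity) (by positivity)]
  push_cast
  nlinarith [sq_nonneg ((n:ℝ)+1)]

lemma hgF_cont : Continuous hgF := by
  apply continuous_tsum (fun n => hgT_cont _) hgSummable
  intro n x
  rw [Real.norm_eq_abs, abs_of_nonneg (hgT_nonneg _ _)]
  exact hgT_le _ _

lemma hgF_nonneg (x : ℝ) : 0 ≤ hgF x := tsum_nonneg (fun n => hgT_nonneg _ _)

/-- on window `k = [hgE k, 2 * hgE k]` (k ≥ 1), only tent `k` matters -/
lemma hgF_window {k : ℕ} (hk : 1 ≤ k) {y : ℝ} (h1 : hgE k ≤ y) (h2 : y ≤ 2 * hgE k) :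
    hgF y = hgT k y := by
  cases k with
  | zero => omega
  | succ m =>
  apply tsum_eq_single m
  intro j hj
  apply hgT_eq_zero
  rcases lt_or_gt_of_ne hj with hlt | hgt
  · -- j < m : tent j+1 lives to the right of the window
    have h4 := hgE4 (j+1)
    have h5 : 2 * hgE (m+1) ≤ hgE (j+1) := by
      have e2 := hgE2 m
      have := hgE_antitone (show j+1 ≤ m by omega)
      linarith [hgE_pos (m+1)]
    rw [abs_sub_comm, abs_of_nonneg (by nlinarith [hgE_pos (j+1+2)])]
    nlinarith [hgE_pos (j+1+2)]
  · -- j > m : tent j+1 lives to the left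
    have h4 : hgE (j+1+2) * 8 = hgE j := hgE8 j
    have h5 : hgE j ≤ hgE (m+1) := hgE_antitone (by omega)
    rw [abs_of_nonneg (by nlinarith)]
    nlinarith

/-- every `y ∈ (0,1]` lies in some window with `m ≥ 1` -/
lemma hgWindow_exists {y : ℝ} (h0 : 0 < y) (h1 : y ≤ 1) :
    ∃ m : ℕ, 1 ≤ m ∧ hgE m ≤ y ∧ y ≤ 2 * hgE m := by
  obtain ⟨n, hn⟩ := exists_pow_lt_of_lt_one h0 (show (1/2:ℝ) < 1 by norm_num)
  have hP : ∃ n, hgE n ≤ y := ⟨n, hn.le⟩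
  classical
  have hmy : hgE (Nat.find hP) ≤ y := Nat.find_spec hP
  rcases Nat.eq_zero_or_pos (Nat.find hP) with h | h
  · refine ⟨1, le_refl _, ?_, ?_⟩
    · have : y = 1 := le_antisymm h1 (by rw [h] at hmy; simpa [hgE] using hmy)
      rw [this]; simp [hgE]; norm_num
    · simp [hgE]; linarith
  · refine ⟨Nat.find hP, h, hmy, ?_⟩
    have hlt := Nat.find_min hP (show Nat.find hP - 1 < Nat.find hP by omega)
    push_neg at hlt
    have h2 := hgE2 (Nat.find hP - 1)
    rw [show Nat.find hP - 1 + 1 = Nat.find hP by omega] at h2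
    linarith

lemma hgF_zero : hgF 0 = 0 := by
  unfold hgF
  convert tsum_zero with n
  apply hgT_eq_zero
  rw [abs_of_nonpos (by nlinarith [hgE_pos (n+1+2)])]
  nlinarith [hgE_pos (n+1+2)]

lemma hgF_le {k : ℕ} (hk : 1 ≤ k) {y : ℝ} (h0 : 0 ≤ y) (hy1 : y ≤ 1)
    (h2 : y ≤ 2 * hgE k) : hgF y ≤ hgA k := by
  rcases eq_or_lt_of_le h0 with h | h
  · rw [← h, hgF_zero]; exact hgA_nonneg k
  obtain ⟨m, hm1, hmy, hym⟩ := hgWindow_exists h hy1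
  rw [hgF_window hm1 hmy hym]
  rcases le_or_gt k m with hkm | hmk
  · exact (hgT_le m y).trans (hgA_antitone hk hkm)
  · -- m < k : then y = hgE m and the tent vanishes there
    have e1 : 2 * hgE k ≤ hgE m := by
      have := hgE_antitone (show m + 1 ≤ k by omega)
      have := hgE2 m
      linarith
    have hy : y = hgE m := le_antisymm (by linarith) hmy
    have hz : hgT m y = 0 := by
      apply hgT_eq_zero
      have h4 := hgE4 m
      rw [hy, abs_of_nonpos (by nlinarith [hgE_pos (m+2)])]
      nlinarith [hgE_pos (m+2)]
    rw [hz]; exact hgA_nonneg k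



/-- continuous "plateau" profile for the horizontal shift of size `hgE (k+2)` -/
def hgPhi (k : ℕ) (x : ℝ) : ℝ :=
  max 0 (min 1 (min ((x - 3 * hgE (k+2)) / hgE (k+2)) ((2 * hgE k - x) / hgE (k+2))))

def hgS (k : ℕ) (x : ℝ) : ℝ := x + hgE (k+2) * hgPhi k x

/-- the perturbed functions -/
def hgG (k : ℕ) : ℝ → ℝ := fun x => hgF (hgS k x)

lemma hgPhi_nonneg (k : ℕ) (x : ℝ) : 0 ≤ hgPhi k x := le_max_left _ _
lemma hgPhi_le_one (k : ℕ) (x : ℝ) : hgPhi k x ≤ 1 :=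
  max_le zero_le_one (min_le_left _ _)

lemma hgPhi_cont (k : ℕ) : Continuous (hgPhi k) := by
  apply continuous_const.max
  apply continuous_const.min
  fun_prop

lemma hgS_cont (k : ℕ) : Continuous (hgS k) :=
  continuous_id.add (continuous_const.mul (hgPhi_cont k))

lemma hgG_cont (k : ℕ) : Continuous (hgG k) := hgF_cont.comp (hgS_cont k)

lemma hgS_ge (k : ℕ) (x : ℝ) : x ≤ hgS k x := by
  have := hgPhi_nonneg k x
  have := (hgE_pos (k+2)).le
  unfold hgS; nlinarith

lemma hgS_sub_le (k : ℕ) (x : ℝ) : hgS k x - x ≤ hgE (k+2) := by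
  have := hgPhi_le_one k x
  have := hgE_pos (k+2)
  unfold hgS; nlinarith

lemma hgS_le_top (k : ℕ) {x : ℝ} (h : x ≤ 2 * hgE k) : hgS k x ≤ 2 * hgE k := by
  have hB : hgPhi k x ≤ (2 * hgE k - x) / hgE (k+2) := by
    apply max_le
    · apply div_nonneg (by linarith) (hgE_pos _).le
    · exact le_trans (min_le_right _ _) (min_le_right _ _)
  have he := hgE_pos (k+2)
  have : hgE (k+2) * hgPhi k x ≤ 2 * hgE k - x := by
    calc hgE (k+2) * hgPhi k x ≤ hgE (k+2) * ((2 * hgE k - x) / hgE (k+2)) := by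
          exact mul_le_mul_of_nonneg_left hB he.le
      _ = 2 * hgE k - x := by field_simp
  unfold hgS; linarith

lemma hgS_eq_of_ge (k : ℕ) {x : ℝ} (h : 2 * hgE k ≤ x) : hgS k x = x := by
  have he := hgE_pos (k+2)
  have hz : hgPhi k x = 0 := by
    apply max_eq_left
    apply le_trans (min_le_right _ _)
    apply le_trans (min_le_right _ _)
    apply div_nonpos_of_nonpos_of_nonneg (by linarith) he.le
  unfold hgS; rw [hz]; ring

lemma hgS_eq_of_le (k : ℕ) {x : ℝ} (h : x ≤ 3 * hgE (k+2)) : hgS k x = x := by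
  have he := hgE_pos (k+2)
  have hz : hgPhi k x = 0 := by
    apply max_eq_left
    apply le_trans (min_le_right _ _)
    apply le_trans (min_le_left _ _)
    apply div_nonpos_of_nonpos_of_nonneg (by linarith) he.le
  unfold hgS; rw [hz]; ring

lemma hgE_le_one (k : ℕ) : hgE k ≤ 1 := hgE_antitone (Nat.zero_le k)

lemma hg2Ek_le_one {k : ℕ} (hk : 1 ≤ k) : 2 * hgE k ≤ 1 := by
  obtain ⟨m, rfl⟩ := Nat.exists_eq_add_of_le hk
  have := hgE2 m
  have := hgE_le_one m
  rw [add_comm 1 m]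
  linarith

lemma hgS_zero (k : ℕ) : hgS k 0 = 0 := by
  apply hgS_eq_of_le
  have := hgE_pos (k+2); linarith

lemma hgS_one {k : ℕ} (hk : 1 ≤ k) : hgS k 1 = 1 :=
  hgS_eq_of_ge k (hg2Ek_le_one hk)

lemma hgS_mem {k : ℕ} (hk : 1 ≤ k) {x : ℝ} (hx : x ∈ Icc (0:ℝ) 1) :
    hgS k x ∈ Icc (0:ℝ) 1 := by
  constructor
  · exact le_trans hx.1 (hgS_ge k x)
  · rcases le_or_gt x (2 * hgE k) with h | h
    · exact le_trans (hgS_le_top k h) (hg2Ek_le_one hk)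
    · rw [hgS_eq_of_ge k h.le]; exact hx.2

/-- peak of tent `k` is at `6 * hgE (k+2)`, which lies in window `k` -/
lemma hg_peak_mem_window (k : ℕ) :
    hgE k ≤ 6 * hgE (k+2) ∧ 6 * hgE (k+2) ≤ 2 * hgE k := by
  have h4 := hgE4 k
  have := hgE_pos (k+2)
  constructor <;> nlinarith

lemma hgPhi_peak {k : ℕ} : hgPhi k (6 * hgE (k+2)) = 1 := by
  have he := hgE_pos (k+2)
  have h4 := hgE4 k
  unfold hgPhi
  rw [show (6 * hgE (k+2) - 3 * hgE (k+2)) / hgE (k+2) = 3 by field_simp; ring,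
    show (2 * hgE k - 6 * hgE (k+2)) / hgE (k+2) = 2 by
      rw [eq_comm, eq_div_iff he.ne']; nlinarith]
  norm_num

lemma hgS_peak {k : ℕ} : hgS k (6 * hgE (k+2)) = 7 * hgE (k+2) := by
  unfold hgS; rw [hgPhi_peak]; ring

/-- the value gap at the peak -/
lemma hgDiff_peak {k : ℕ} (hk : 1 ≤ k) :
    hgF (6 * hgE (k+2)) - hgG k (6 * hgE (k+2)) = hgA k := by
  obtain ⟨hw1, hw2⟩ := hg_peak_mem_window k
  have h4 := hgE4 k
  have he := hgE_pos (k+2)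
  have hf : hgF (6 * hgE (k+2)) = hgA k := by
    rw [hgF_window hk hw1 hw2, hgT_peak]
  have hg : hgG k (6 * hgE (k+2)) = 0 := by
    unfold hgG
    rw [hgS_peak, hgF_window hk (by nlinarith) (by nlinarith)]
    apply hgT_eq_zero
    rw [abs_of_nonneg (by nlinarith)]
    nlinarith
  rw [hf, hg]; ring

lemma hgDiff_le {k : ℕ} (hk : 1 ≤ k) {x : ℝ} (hx : x ∈ Icc (0:ℝ) 1) :
    |hgF x - hgG k x| ≤ hgA k := by
  rcases le_or_gt x (2 * hgE k) with h | h
  · have h1 : hgF x ≤ hgA k := hgF_le hk hx.1 hx.2 h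
    have h2 : hgG k x ≤ hgA k := by
      have hs := hgS_mem hk hx
      exact hgF_le hk hs.1 hs.2 (hgS_le_top k h)
    have h3 := hgF_nonneg x
    have h4 := hgF_nonneg (hgS k x)
    rw [abs_le]
    unfold hgG at *
    constructor <;> nlinarith
  · rw [show hgG k x = hgF x by unfold hgG; rw [hgS_eq_of_ge k h.le]]
    simpa using hgA_nonneg k

lemma hgE_eq_pow (k : ℕ) : hgE k = 1 / 2 ^ k := by
  rw [hgE, div_pow, one_pow]



lemma hgSup_eq {k : ℕ} (hk : 1 ≤ k) :
    (⨆ x : Set.Icc (0:ℝ) 1, |hgF x - hgG k x|) = hgA k := by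
  have hbdd : ∀ x : Set.Icc (0:ℝ) 1, |hgF x - hgG k x| ≤ hgA k :=
    fun x => hgDiff_le hk x.2
  have hmem : (6 * hgE (k+2)) ∈ Set.Icc (0:ℝ) 1 := by
    have := hgE_pos (k+2)
    have h2 := (hg_peak_mem_window k).2
    have h3 := hg2Ek_le_one hk
    exact ⟨by linarith, by linarith⟩
  apply le_antisymm (ciSup_le hbdd)
  have hrange : BddAbove (Set.range fun x : Set.Icc (0:ℝ) 1 => |hgF x - hgG k x|) := by
    refine ⟨hgA k, ?_⟩
    rintro _ ⟨x, rfl⟩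
    exact hbdd x
  have := le_ciSup hrange (⟨6 * hgE (k+2), hmem⟩ : Set.Icc (0:ℝ) 1)
  simp only at this
  rw [show |hgF (6 * hgE (k+2)) - hgG k (6 * hgE (k+2))| = hgA k by
    rw [hgDiff_peak hk]; exact abs_of_nonneg (hgA_nonneg k)] at this
  exact this

lemma hgHD_le {k : ℕ} (hk : 1 ≤ k) :
    hausdorffDist
      {p : ℝ × ℝ | p.1 ∈ Set.Icc (0:ℝ) 1 ∧ p.2 = hgG k p.1}
      {p : ℝ × ℝ | p.1 ∈ Set.Icc (0:ℝ) 1 ∧ p.2 = hgF p.1} ≤ 1 / 2 ^ k := by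
  have hEk : hgE (k+2) ≤ 1 / 2 ^ k := by
    rw [← hgE_eq_pow]; exact hgE_antitone (by omega)
  have hr : (0:ℝ) ≤ 1 / 2 ^ k := by positivity
  apply hausdorffDist_le_of_mem_dist hr
  · rintro ⟨x, y⟩ ⟨hx, hy⟩
    simp only at hx hy
    subst hy
    refine ⟨(hgS k x, hgF (hgS k x)), ⟨hgS_mem hk hx, rfl⟩, ?_⟩
    rw [Prod.dist_eq]
    apply max_le
    · rw [Real.dist_eq, abs_of_nonpos (by linarith [hgS_ge k x])]
      have := hgS_sub_le k x
      simp only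
      linarith
    · simp [hgG, Real.dist_eq]
  · rintro ⟨y, z⟩ ⟨hy, hz⟩
    simp only at hy hz
    subst hz
    have hIcc : y ∈ Set.Icc (hgS k 0) (hgS k 1) := by
      rw [hgS_zero, hgS_one hk]; exact hy
    obtain ⟨x, hx, hSx⟩ :=
      intermediate_value_Icc (by norm_num : (0:ℝ) ≤ 1) (hgS_cont k).continuousOn hIcc
    refine ⟨(x, hgG k x), ⟨hx, rfl⟩, ?_⟩
    rw [Prod.dist_eq]
    have h1 : x ≤ y := by rw [← hSx]; exact hgS_ge k x
    have h2 : y - x ≤ hgE (k+2) := by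
      have := hgS_sub_le k x
      rw [hSx] at this
      exact this
    apply max_le
    · rw [Real.dist_eq]
      simp only
      rw [abs_of_nonneg (by linarith)]
      linarith
    · simp only [hgG, hSx, Real.dist_eq, sub_self, abs_zero]
      exact hr

theorem hausdorff_graph_geometric_but_uniform_not
    : ∃ (f : ℝ → ℝ) (F : ℕ → ℝ → ℝ),
      ContinuousOn f (Set.Icc 0 1) ∧ (∀ k, ContinuousOn (F k) (Set.Icc 0 1)) ∧
      (∀ k : ℕ, 1 ≤ k →
        hausdorffDist
          {p : ℝ × ℝ | p.1 ∈ Set.Icc (0:ℝ) 1 ∧ p.2 = F k p.1}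
          {p : ℝ × ℝ | p.1 ∈ Set.Icc (0:ℝ) 1 ∧ p.2 = f p.1} ≤ 1 / 2 ^ k) ∧
      (∀ k : ℕ, 1 ≤ k →
        (⨆ x : Set.Icc (0:ℝ) 1, |f x - F k x|) = 1 / (2 * (k : ℝ) ^ 2)) ∧
      Filter.limsup (fun k : ℕ =>
        (hausdorffDist
          {p : ℝ × ℝ | p.1 ∈ Set.Icc (0:ℝ) 1 ∧ p.2 = F k p.1}
          {p : ℝ × ℝ | p.1 ∈ Set.Icc (0:ℝ) 1 ∧ p.2 = f p.1}) ^ ((1:ℝ)/k))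
        Filter.atTop < 1 ∧
      Filter.limsup (fun k : ℕ =>
        (⨆ x : Set.Icc (0:ℝ) 1, |f x - F k x|) ^ ((1:ℝ)/k)) Filter.atTop = 1 := by
  refine ⟨hgF, hgG, hgF_cont.continuousOn, fun k => (hgG_cont k).continuousOn,
    fun k hk => hgHD_le hk, fun k hk => hgSup_eq hk, ?_, ?_⟩
  · -- limsup of Hausdorff distances^(1/k) is < 1
    have hle : ∀ᶠ k : ℕ in atTop,
        (hausdorffDist
          {p : ℝ × ℝ | p.1 ∈ Set.Icc (0:ℝ) 1 ∧ p.2 = hgG k p.1}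
          {p : ℝ × ℝ | p.1 ∈ Set.Icc (0:ℝ) 1 ∧ p.2 = hgF p.1}) ^ ((1:ℝ)/k)
          ≤ (1/2 : ℝ) := by
      filter_upwards [eventually_ge_atTop 1] with k hk
      have hk0 : ((k:ℝ)) ≠ 0 := Nat.cast_ne_zero.2 (by omega)
      calc (hausdorffDist _ _) ^ ((1:ℝ)/k)
          ≤ ((1:ℝ)/2^k) ^ ((1:ℝ)/k) :=
            Real.rpow_le_rpow hausdorffDist_nonneg (hgHD_le hk) (by positivity)
        _ = (1/2 : ℝ) := by
            rw [show (1:ℝ)/2^k = ((1:ℝ)/2)^k by rw [div_pow, one_pow],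
              ← Real.rpow_natCast ((1:ℝ)/2) k, ← Real.rpow_mul (by norm_num),
              mul_one_div_cancel hk0, Real.rpow_one]
    have hcob : IsCoboundedUnder (· ≤ ·) atTop (fun k : ℕ =>
        (hausdorffDist
          {p : ℝ × ℝ | p.1 ∈ Set.Icc (0:ℝ) 1 ∧ p.2 = hgG k p.1}
          {p : ℝ × ℝ | p.1 ∈ Set.Icc (0:ℝ) 1 ∧ p.2 = hgF p.1}) ^ ((1:ℝ)/k)) :=
      isCoboundedUnder_le_of_le atTop
        (fun k => Real.rpow_nonneg hausdorffDist_nonneg _)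
    calc Filter.limsup _ atTop ≤ (1/2 : ℝ) := Filter.limsup_le_of_le hcob hle
      _ < 1 := by norm_num
  · -- limsup of sup norms^(1/k) is 1
    have h1 : Tendsto (fun k : ℕ => Real.log k / k) atTop (𝓝 0) := by
      have := (Real.tendsto_pow_log_div_mul_add_atTop 1 0 1 one_ne_zero).comp
        tendsto_natCast_atTop_atTop
      simpa [Function.comp_def] using this
    have h2 : Tendsto (fun k : ℕ => Real.log 2 / k) atTop (𝓝 0) :=
      tendsto_const_div_atTop_nhds_zero_nat _
    have harg : Tendsto
        (fun k : ℕ => (-(Real.log 2) - 2 * Real.log k) * ((1:ℝ)/k)) atTop (𝓝 0) := by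
      have h := (h2.neg).sub (h1.const_mul 2)
      rw [show -(0:ℝ) - 2*0 = 0 by norm_num] at h
      exact h.congr fun k => by ring
    have hexp : Tendsto
        (fun k : ℕ => Real.exp ((-(Real.log 2) - 2 * Real.log k) * ((1:ℝ)/k)))
        atTop (𝓝 1) := by
      have := (Real.continuous_exp.tendsto 0).comp harg
      simpa [Function.comp_def] using this
    have heq : ∀ᶠ k : ℕ in atTop,
        Real.exp ((-(Real.log 2) - 2 * Real.log k) * ((1:ℝ)/k)) =
        (⨆ x : Set.Icc (0:ℝ) 1, |hgF x - hgG k x|) ^ ((1:ℝ)/k) := by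
      filter_upwards [eventually_ge_atTop 1] with k hk
      have hkpos : (0:ℝ) < (k:ℝ) := by exact_mod_cast Nat.pos_of_ne_zero (by omega)
      have hapos : (0:ℝ) < hgA k := by unfold hgA; positivity
      rw [hgSup_eq hk, Real.rpow_def_of_pos hapos]
      congr 1
      have hlog : Real.log (hgA k) = -(Real.log 2) - 2 * Real.log k := by
        unfold hgA
        rw [one_div, Real.log_inv, Real.log_mul (by norm_num) (by positivity),
          Real.log_pow]
        push_cast
        ring
      rw [hlog]
    exact Filter.Tendsto.limsup_eq (hexp.congr' heq)

end HGexample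
end

section
/- Let n ≥ 1 and let a = (a_1,…,a_n), b = (b_1,…,b_n) ∈ ℂ^n with max_i |a_i| ≤ C and max_i |b_i| ≤ C for some C > 1. Let ζ^a_1,…,ζ^a_n be the roots (with multiplicity) of P_a(t) = t^n + a_1 t^(n−1) + ⋯ + a_n and similarly for P_b. Then there exists a permutation σ of {1,…,n} such that |ζ^a_j − ζ^b_{σ(j)}| ≤ 4nC·(max_i |a_i − b_i|)^(1/n) for all j ∈ {1,…,n}. -/
open Finset Polynomial


noncomputable def hcr_pe (n : ℕ) (c : Fin n → ℂ) (t : ℂ) : ℂ :=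
  t ^ n + ∑ i : Fin n, c i * t ^ (n - 1 - (i : ℕ))

lemma hcr_root_bound {n : ℕ} (hn : 1 ≤ n) {C : ℝ} (hC : 1 ≤ C) {c : Fin n → ℂ}
    (hc : ∀ i, ‖c i‖ ≤ C) {z : ℂ} (hz : hcr_pe n c z = 0) :
    ‖z‖ ≤ 2 * C := by
  by_contra h
  push_neg at h
  set r := ‖z‖ with hr
  have hr2 : C + 1 < r := by linarith
  have hrpos : (0:ℝ) < r := by linarith
  have h1 : r ^ n ≤ C * ∑ k ∈ Finset.range n, r ^ k := by
    have hzn : z ^ n = -∑ i : Fin n, c i * z ^ (n - 1 - (i : ℕ)) := by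
      have := hz; unfold hcr_pe at this; linear_combination this
    have : r ^ n ≤ ∑ i : Fin n, C * r ^ (n - 1 - (i : ℕ)) := by
      calc r ^ n = ‖z ^ n‖ := by rw [norm_pow]
        _ = ‖∑ i : Fin n, c i * z ^ (n - 1 - (i : ℕ))‖ := by
              rw [hzn, norm_neg]
        _ ≤ ∑ i : Fin n, ‖c i * z ^ (n - 1 - (i : ℕ))‖ :=
              norm_sum_le _ _
        _ ≤ ∑ i : Fin n, C * r ^ (n - 1 - (i : ℕ)) := by
              apply Finset.sum_le_sum
              intro i _
              rw [norm_mul, norm_pow]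
              exact mul_le_mul_of_nonneg_right (hc i) (by positivity)
    calc r ^ n ≤ ∑ i : Fin n, C * r ^ (n - 1 - (i : ℕ)) := this
      _ = C * ∑ i : Fin n, r ^ (n - 1 - (i : ℕ)) := by rw [Finset.mul_sum]
      _ = C * ∑ k ∈ Finset.range n, r ^ (n - 1 - k) := by
            rw [Fin.sum_univ_eq_sum_range (fun k => r ^ (n - 1 - k))]
      _ = C * ∑ k ∈ Finset.range n, r ^ k := by rw [Finset.sum_range_reflect]
  have hgs : (∑ k ∈ Finset.range n, r ^ k) * (r - 1) = r ^ n - 1 := geom_sum_mul r n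
  have hrn : 0 < r ^ n := pow_pos hrpos n
  nlinarith [mul_le_mul_of_nonneg_right h1 (le_of_lt (show (0:ℝ) < r - 1 by linarith))]






-- every root z of pe c is within 2*C*ε^(1/n) of some ζa j
lemma hcr_close_root {n : ℕ} (hn : 1 ≤ n) {C : ℝ} (hC : 1 ≤ C) {a c : Fin n → ℂ}
    (ha : ∀ i, ‖a i‖ ≤ C) (hc : ∀ i, ‖c i‖ ≤ C)
    {ζa : Fin n → ℂ} (hPa : ∀ t : ℂ, hcr_pe n a t = ∏ j : Fin n, (t - ζa j))
    {ε : ℝ} (hε : ∀ i, ‖a i - c i‖ ≤ ε)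
    {z : ℂ} (hz : hcr_pe n c z = 0) :
    ∃ j, ‖z - ζa j‖ ≤ 2 * C * ε ^ ((1:ℝ)/n) := by
  have hε0 : 0 ≤ ε := le_trans (norm_nonneg _) (hε ⟨0, hn⟩)
  have hzb : ‖z‖ ≤ 2 * C := hcr_root_bound hn hC hc hz
  -- product bound
  have key : ∏ j : Fin n, ‖z - ζa j‖ ≤ (2*C)^n * ε := by
    have h2C : (1:ℝ) ≤ 2 * C := by linarith
    calc ∏ j : Fin n, ‖z - ζa j‖
        = ‖∏ j : Fin n, (z - ζa j)‖ := (norm_prod _ _).symm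
      _ = ‖hcr_pe n a z - hcr_pe n c z‖ := by rw [hPa z, hz, sub_zero]
      _ = ‖∑ i : Fin n, (a i - c i) * z ^ (n - 1 - (i : ℕ))‖ := by
            unfold hcr_pe
            rw [add_sub_add_left_eq_sub, ← Finset.sum_sub_distrib]
            exact congrArg norm (Finset.sum_congr rfl (fun i _ => by ring))
      _ ≤ ∑ i : Fin n, ‖(a i - c i) * z ^ (n - 1 - (i : ℕ))‖ :=
            norm_sum_le _ _
      _ ≤ ∑ i : Fin n, ε * (2*C) ^ (n - 1 - (i : ℕ)) := by
            apply Finset.sum_le_sum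
            intro i _
            rw [norm_mul, norm_pow]
            exact mul_le_mul (hε i) (pow_le_pow_left₀ (norm_nonneg _) hzb _)
              (by positivity) hε0
      _ = ε * ∑ k ∈ Finset.range n, (2*C) ^ (n - 1 - k) := by
            rw [← Finset.mul_sum, Fin.sum_univ_eq_sum_range (fun k => (2*C) ^ (n - 1 - k))]
      _ = ε * ∑ k ∈ Finset.range n, (2*C) ^ k := by rw [Finset.sum_range_reflect]
      _ ≤ ε * (2*C)^n := by
            apply mul_le_mul_of_nonneg_left ?_ hε0
            have hgs : (∑ k ∈ Finset.range n, (2*C) ^ k) * (2*C - 1) = (2*C) ^ n - 1 :=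
              geom_sum_mul (2*C) n
            have hsum0 : 0 ≤ ∑ k ∈ Finset.range n, (2*C) ^ k :=
              Finset.sum_nonneg fun k _ => by positivity
            nlinarith
      _ = (2*C)^n * ε := mul_comm _ _
  -- now extract a close root
  set d := 2 * C * ε ^ ((1:ℝ)/n) with hd
  have hd0 : 0 ≤ d := by
    have : (0:ℝ) ≤ ε ^ ((1:ℝ)/n) := Real.rpow_nonneg hε0 _
    positivity
  have hdn : d ^ n = (2*C)^n * ε := by
    rw [hd, mul_pow]
    congr 1
    rw [← Real.rpow_natCast (ε ^ ((1:ℝ)/n)) n, ← Real.rpow_mul hε0]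
    rw [one_div, inv_mul_cancel₀ (by exact_mod_cast Nat.one_le_iff_ne_zero.mp hn : (n:ℝ) ≠ 0)]
    exact Real.rpow_one ε
  by_contra hcon
  push_neg at hcon
  rcases eq_or_lt_of_le hd0 with hd0' | hd0'
  · -- d = 0 : product positive but ≤ 0
    have : (0:ℝ) < ∏ j : Fin n, ‖z - ζa j‖ :=
      Finset.prod_pos fun j _ => by rw [← hd0'] at hcon; exact hcon j
    rw [← hd0'] at hdn
    simp only [← hdn] at key
    rw [zero_pow (by omega)] at key
    linarith
  · have : d ^ n < ∏ j : Fin n, ‖z - ζa j‖ := by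
      calc d ^ n = ∏ _j : Fin n, d := by rw [Finset.prod_const, Finset.card_univ, Fintype.card_fin]
        _ < ∏ j : Fin n, ‖z - ζa j‖ := by
            apply Finset.prod_lt_prod_of_nonempty (fun j _ => hd0') (fun j _ => hcon j)
            exact Finset.univ_nonempty_iff.mpr ⟨⟨0, hn⟩⟩
    rw [hdn] at this
    linarith




noncomputable def hcr_poly (n : ℕ) (c : Fin n → ℂ) : Polynomial ℂ :=
  X ^ n + ∑ i : Fin n, C (c i) * X ^ (n - 1 - (i : ℕ))

lemma hcr_poly_eval (n : ℕ) (c : Fin n → ℂ) (t : ℂ) :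
    (hcr_poly n c).eval t = hcr_pe n c t := by
  unfold hcr_poly hcr_pe
  simp [eval_finset_sum]

lemma hcr_sum_degree_lt {n : ℕ} (hn : 1 ≤ n) (c : Fin n → ℂ) :
    (∑ i : Fin n, C (c i) * X ^ (n - 1 - (i : ℕ)) : Polynomial ℂ).degree < (n : ℕ) := by
  apply lt_of_le_of_lt (degree_sum_le _ _)
  rw [Finset.sup_lt_iff (by exact_mod_cast WithBot.bot_lt_coe n)]
  intro i _
  apply lt_of_le_of_lt (degree_C_mul_X_pow_le _ _)
  exact_mod_cast (by omega : n - 1 - (i : ℕ) < n)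

lemma hcr_poly_monic {n : ℕ} (hn : 1 ≤ n) (c : Fin n → ℂ) : (hcr_poly n c).Monic :=
  monic_X_pow_add (hcr_sum_degree_lt hn c)

lemma hcr_poly_natDegree {n : ℕ} (hn : 1 ≤ n) (c : Fin n → ℂ) :
    (hcr_poly n c).natDegree = n := by
  apply natDegree_eq_of_degree_eq_some
  unfold hcr_poly
  rw [degree_add_eq_left_of_degree_lt (by rw [degree_X_pow]; exact hcr_sum_degree_lt hn c),
    degree_X_pow]

lemma hcr_root_tuple_exists {n : ℕ} (hn : 1 ≤ n) (c : Fin n → ℂ) :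
    ∃ q : Fin n → ℂ, ∀ t : ℂ, hcr_pe n c t = ∏ j : Fin n, (t - q j) := by
  have hm := hcr_poly_monic hn c
  have hsp : Splits (hcr_poly n c) := IsAlgClosed.splits _
  have hcard : Multiset.card (hcr_poly n c).roots = n := by
    rw [splits_iff_card_roots.mp hsp, hcr_poly_natDegree hn c]
  have hfact := hsp.eq_prod_roots_of_monic hm
  set l := (hcr_poly n c).roots.toList with hl
  have hlen : l.length = n := by rw [hl, Multiset.length_toList, hcard]
  refine ⟨fun j => l.get (Fin.cast hlen.symm j), fun t => ?_⟩
  have h1 : hcr_pe n c t = ((hcr_poly n c).roots.map (fun a => t - a)).prod := by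
    rw [← hcr_poly_eval n c t]
    conv_lhs => rw [hfact]
    rw [eval_multiset_prod, Multiset.map_map]
    congr 1
    apply Multiset.map_congr rfl
    intro x _
    simp
  rw [h1, ← Multiset.coe_toList (hcr_poly n c).roots, Multiset.map_coe, Multiset.prod_coe, ← hl]
  have h2 : l.map (fun a => t - a) = List.ofFn (fun j => t - l.get j) := by
    conv_lhs => rw [← List.ofFn_get l]
    rw [List.map_ofFn]
    rfl
  rw [h2, List.prod_ofFn]
  exact (Equiv.prod_comp (finCongr hlen.symm) (fun j => t - l.get j)).symm


lemma hcr_perm_of_multiset_eq : ∀ {n : ℕ} (x y : Fin n → ℂ),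
    Multiset.map x Finset.univ.val = Multiset.map y Finset.univ.val →
    ∃ σ : Equiv.Perm (Fin n), ∀ j, x j = y (σ j) := by
  intro n
  induction n with
  | zero => exact fun x y _ => ⟨1, fun j => j.elim0⟩
  | succ n ih =>
    intro x y h
    have hx0 : x 0 ∈ Multiset.map y Finset.univ.val := by
      rw [← h]
      exact Multiset.mem_map_of_mem x (Finset.mem_univ_val 0)
    rw [Multiset.mem_map] at hx0
    obtain ⟨k, -, hk⟩ := hx0
    have hxsplit : Multiset.map x Finset.univ.val
        = x 0 ::ₘ Multiset.map (x ∘ Fin.succ) Finset.univ.val := by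
      rw [Fin.univ_succ, Finset.cons_val, Multiset.map_cons, Finset.map_val, Multiset.map_map]
      rfl
    have hysplit : Multiset.map y Finset.univ.val
        = y k ::ₘ Multiset.map (y ∘ k.succAbove) Finset.univ.val := by
      rw [Fin.univ_succAbove n k, Finset.cons_val, Multiset.map_cons, Finset.map_val,
        Multiset.map_map]
      rfl
    rw [hxsplit, hysplit, ← hk, Multiset.cons_inj_right] at h
    obtain ⟨σ', hσ'⟩ := ih (x ∘ Fin.succ) (y ∘ k.succAbove) h
    refine ⟨(finSuccEquiv' 0).trans ((Equiv.optionCongr σ').trans (finSuccEquiv' k).symm),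
      fun j => ?_⟩
    refine Fin.cases ?_ (fun i => ?_) j
    · have : ((finSuccEquiv' 0).trans ((Equiv.optionCongr σ').trans (finSuccEquiv' k).symm)) 0
          = k := by
        simp [finSuccEquiv'_at, finSuccEquiv'_symm_none]
      rw [this]; exact hk.symm
    · have : ((finSuccEquiv' 0).trans ((Equiv.optionCongr σ').trans (finSuccEquiv' k).symm))
          i.succ = k.succAbove (σ' i) := by
        have h0 : (finSuccEquiv' (0 : Fin (n+1))) i.succ = some i := by
          have := finSuccEquiv'_succAbove (0 : Fin (n+1)) i
          rwa [Fin.succAbove_zero] at this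
        simp [h0, finSuccEquiv'_symm_some]
      rw [this]; exact hσ' i

lemma hcr_perm_of_prod_eq {n : ℕ} (x y : Fin n → ℂ)
    (h : ∀ t : ℂ, ∏ j : Fin n, (t - x j) = ∏ j : Fin n, (t - y j)) :
    ∃ σ : Equiv.Perm (Fin n), ∀ j, x j = y (σ j) := by
  apply hcr_perm_of_multiset_eq
  have hpoly : ∏ j : Fin n, (X - C (x j)) = ∏ j : Fin n, (X - C (y j)) := by
    apply Polynomial.funext
    intro t
    simpa [eval_prod] using h t
  have key : ∀ z : Fin n → ℂ, ((Multiset.map z Finset.univ.val).map fun a => X - C a).prod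
      = ∏ j : Fin n, (X - C (z j)) := by
    intro z
    rw [Multiset.map_map]
    rfl
  have := congrArg Polynomial.roots (key x ▸ key y ▸ hpoly)
  rwa [Polynomial.roots_multiset_prod_X_sub_C, Polynomial.roots_multiset_prod_X_sub_C] at this








lemma hcr_root_zero {n : ℕ} {c q : Fin n → ℂ}
    (hq : ∀ t : ℂ, hcr_pe n c t = ∏ j : Fin n, (t - q j)) (j : Fin n) :
    hcr_pe n c (q j) = 0 := by
  rw [hq (q j)]
  exact Finset.prod_eq_zero (Finset.mem_univ j) (sub_self _)

-- continuity of roots in matching distance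
lemma hcr_compactness {n : ℕ} (hn : 1 ≤ n) (c0 p0 : Fin n → ℂ)
    (h0 : ∀ t : ℂ, hcr_pe n c0 t = ∏ j : Fin n, (t - p0 j))
    {r : ℝ} (hr : 0 < r) :
    ∃ η > 0, ∀ (c q : Fin n → ℂ), (∀ i, ‖c i - c0 i‖ ≤ η) →
      (∀ t : ℂ, hcr_pe n c t = ∏ j : Fin n, (t - q j)) →
      ∃ τ : Equiv.Perm (Fin n), ∀ j, ‖p0 j - q (τ j)‖ ≤ r := by
  by_contra hcon
  push_neg at hcon
  -- for each k : ℕ, get bad c_k, q_k with coefficient distance ≤ 1/(k+1)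
  have hsel : ∀ k : ℕ, ∃ cq : (Fin n → ℂ) × (Fin n → ℂ),
      (∀ i, ‖cq.1 i - c0 i‖ ≤ 1/(k+1)) ∧
      (∀ t : ℂ, hcr_pe n cq.1 t = ∏ j : Fin n, (t - cq.2 j)) ∧
      ∀ τ : Equiv.Perm (Fin n), ∃ j, r < ‖p0 j - cq.2 (τ j)‖ := by
    intro k
    obtain ⟨c, q, h1, h2, h3⟩ := hcon (1/(k+1)) (by positivity)
    exact ⟨(c, q), h1, h2, fun τ => by
      obtain ⟨j, hj⟩ := h3 τ
      exact ⟨j, hj⟩⟩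
  choose cq hc1 hc2 hc3 using hsel
  set K : ℝ := 1 + ∑ i : Fin n, ‖c0 i‖ with hK
  have hK1 : (1:ℝ) ≤ K := by
    have : 0 ≤ ∑ i : Fin n, ‖c0 i‖ :=
      Finset.sum_nonneg fun i _ => norm_nonneg _
    linarith
  have hcbound : ∀ k i, ‖(cq k).1 i‖ ≤ K := by
    intro k i
    have h1 : ‖(cq k).1 i‖ ≤ ‖(cq k).1 i - c0 i‖
        + ‖c0 i‖ := by
      calc ‖(cq k).1 i‖ = ‖((cq k).1 i - c0 i) + c0 i‖ := by ring_nf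
        _ ≤ _ := norm_add_le _ _
    have h2 : ‖c0 i‖ ≤ ∑ i' : Fin n, ‖c0 i'‖ :=
      Finset.single_le_sum (fun i' _ => norm_nonneg _) (Finset.mem_univ i)
    have h3 : (1:ℝ)/(k+1) ≤ 1 := by
      rw [div_le_one (by positivity)]
      linarith [Nat.cast_nonneg (α := ℝ) k]
    linarith [hc1 k i]
  have hqbound : ∀ k, (cq k).2 ∈ Metric.closedBall (0 : Fin n → ℂ) (2*K) := by
    intro k
    rw [Metric.mem_closedBall, dist_zero_right, pi_norm_le_iff_of_nonneg (by linarith)]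
    intro j
    exact hcr_root_bound hn hK1 (hcbound k) (hcr_root_zero (hc2 k) j)
  obtain ⟨qlim, -, φ, hφ, hlim⟩ := tendsto_subseq_of_bounded
    (Metric.isBounded_closedBall (x := (0 : Fin n → ℂ)) (r := 2*K)) hqbound
  -- coefficients converge to c0
  have hclim : ∀ i, Filter.Tendsto (fun k => ((cq (φ k)).1 i)) Filter.atTop (nhds (c0 i)) := by
    intro i
    rw [tendsto_iff_dist_tendsto_zero]
    refine squeeze_zero (g := fun k => (1:ℝ)/(φ k + 1)) (fun k => dist_nonneg) (fun k => ?_)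
      (tendsto_one_div_add_atTop_nhds_zero_nat.comp hφ.tendsto_atTop)
    rw [Complex.dist_eq]
    exact_mod_cast hc1 (φ k) i
  have hqlim : ∀ j, Filter.Tendsto (fun k => ((cq (φ k)).2 j)) Filter.atTop (nhds (qlim j)) := by
    intro j
    exact (tendsto_pi_nhds.mp hlim) j
  -- limit polynomial identity
  have hlimeq : ∀ t : ℂ, hcr_pe n c0 t = ∏ j : Fin n, (t - qlim j) := by
    intro t
    have hL : Filter.Tendsto (fun k => hcr_pe n ((cq (φ k)).1) t) Filter.atTop
        (nhds (hcr_pe n c0 t)) := by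
      unfold hcr_pe
      apply Filter.Tendsto.add tendsto_const_nhds
      apply tendsto_finset_sum
      intro i _
      exact (hclim i).mul tendsto_const_nhds
    have hR : Filter.Tendsto (fun k => ∏ j : Fin n, (t - (cq (φ k)).2 j)) Filter.atTop
        (nhds (∏ j : Fin n, (t - qlim j))) := by
      apply tendsto_finset_prod
      intro j _
      exact Filter.Tendsto.sub tendsto_const_nhds (hqlim j)
    have : (fun k => hcr_pe n ((cq (φ k)).1) t) = fun k => ∏ j : Fin n, (t - (cq (φ k)).2 j) := by
      funext k
      exact hc2 (φ k) t
    rw [this] at hL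
    exact tendsto_nhds_unique hL hR
  -- qlim is a permutation of p0
  obtain ⟨τ0, hτ0⟩ := hcr_perm_of_prod_eq p0 qlim (fun t => by rw [← h0 t, hlimeq t])
  -- eventually all coordinates are within r
  have hev : ∀ᶠ k in Filter.atTop, ∀ j, ‖p0 j - (cq (φ k)).2 (τ0 j)‖ ≤ r := by
    rw [Filter.eventually_all]
    intro j
    have : Filter.Tendsto (fun k => ‖p0 j - (cq (φ k)).2 (τ0 j)‖) Filter.atTop
        (nhds (‖p0 j - qlim (τ0 j)‖)) := by
      apply Filter.Tendsto.comp continuous_norm.continuousAt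
      exact Filter.Tendsto.sub tendsto_const_nhds (hqlim (τ0 j))
    rw [← hτ0 j] at this
    simp only [sub_self, norm_zero] at this
    have := this.eventually_le_const (show (0:ℝ) < r from hr)
    exact this
  obtain ⟨k, hk⟩ := hev.exists
  obtain ⟨j, hj⟩ := hc3 (φ k) τ0
  exact absurd (hk j) (not_le.mpr hj)














theorem hoelder_continuity_of_roots
    (n : ℕ) (hn : 1 ≤ n) (C : ℝ) (hC : 1 < C)
    (a b : Fin n → ℂ)
    (ha : ∀ i, ‖a i‖ ≤ C) (hb : ∀ i, ‖b i‖ ≤ C)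
    (ζa ζb : Fin n → ℂ)
    (hPa : ∀ t : ℂ, t ^ n + ∑ i : Fin n, a i * t ^ (n - 1 - (i : ℕ)) =
      ∏ j : Fin n, (t - ζa j))
    (hPb : ∀ t : ℂ, t ^ n + ∑ i : Fin n, b i * t ^ (n - 1 - (i : ℕ)) =
      ∏ j : Fin n, (t - ζb j)) :
    ∃ σ : Equiv.Perm (Fin n), ∀ j : Fin n,
      ‖ζa j - ζb (σ j)‖ ≤
        4 * n * C *
          (Finset.univ.sup' (Finset.univ_nonempty_iff.mpr ⟨⟨0, hn⟩⟩)
            (fun i => ‖a i - b i‖)) ^ ((1:ℝ) / n) := by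
  classical
  have hC1 : (1:ℝ) ≤ C := le_of_lt hC
  set εhat : ℝ := Finset.univ.sup' (Finset.univ_nonempty_iff.mpr ⟨⟨0, hn⟩⟩)
            (fun i => ‖a i - b i‖) with hεhat
  have hεle : ∀ i, ‖a i - b i‖ ≤ εhat := by
    intro i
    rw [hεhat]
    exact Finset.le_sup' (fun i => ‖a i - b i‖) (Finset.mem_univ i)
  have hε0 : 0 ≤ εhat := le_trans (norm_nonneg _) (hεle ⟨0, hn⟩)
  set dd : ℝ := 2 * C * εhat ^ ((1:ℝ)/n) with hdd
  have hd0 : 0 ≤ dd := by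
    have : (0:ℝ) ≤ εhat ^ ((1:ℝ)/n) := Real.rpow_nonneg hε0 _
    positivity
  have hPa' : ∀ t : ℂ, hcr_pe n a t = ∏ j : Fin n, (t - ζa j) := hPa
  have hPb' : ∀ t : ℂ, hcr_pe n b t = ∏ j : Fin n, (t - ζb j) := hPb
  -- the cluster graph on the roots of P_a
  set G : SimpleGraph (Fin n) :=
    { Adj := fun j k => j ≠ k ∧ ‖ζa j - ζa k‖ ≤ 2*dd
      symm := by
        refine ⟨?_⟩
        rintro j k ⟨h1, h2⟩
        exact ⟨h1.symm, by rwa [norm_sub_rev]⟩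
      loopless := ⟨fun j h => h.1 rfl⟩ } with hG
  -- distance bound along walks
  have walkbound : ∀ (u v : Fin n) (w : G.Walk u v),
      ‖ζa u - ζa v‖ ≤ w.length * (2*dd) := by
    intro u v w
    induction w with
    | nil => simp
    | cons h w ih =>
      rename_i u' x v'
      calc ‖ζa u' - ζa v'‖
          ≤ ‖ζa u' - ζa x‖ + ‖ζa x - ζa v'‖ := norm_sub_le_norm_sub_add_norm_sub _ _ _
        _ ≤ 2*dd + (w.length : ℝ) * (2*dd) := add_le_add h.2 ih
        _ = ((w.length : ℝ) + 1) * (2*dd) := by ring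
        _ = ((SimpleGraph.Walk.cons h w).length : ℝ) * (2*dd) := by
              rw [SimpleGraph.Walk.length_cons]; push_cast; ring
  have hdiam : ∀ (u v : Fin n), G.Reachable u v →
      ‖ζa u - ζa v‖ ≤ ((n:ℝ) - 1) * (2*dd) := by
    intro u v hr
    obtain ⟨w⟩ := hr
    set p := w.toPath with hp
    have hlen : (p.1.length : ℝ) ≤ (n:ℝ) - 1 := by
      have := p.2.length_lt
      rw [Fintype.card_fin] at this
      have : p.1.length ≤ n - 1 := by omega
      calc (p.1.length : ℝ) ≤ ((n-1 : ℕ) : ℝ) := by exact_mod_cast this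
        _ = (n:ℝ) - 1 := by rw [Nat.cast_sub hn]; norm_num
    calc ‖ζa u - ζa v‖ ≤ (p.1.length : ℝ) * (2*dd) := walkbound u v p.1
      _ ≤ ((n:ℝ) - 1) * (2*dd) := by
          apply mul_le_mul_of_nonneg_right hlen (by linarith)
  -- the gap γ
  set P : Finset (Fin n × Fin n) :=
    Finset.univ.filter (fun p : Fin n × Fin n => ¬ G.Reachable p.1 p.2) with hP
  set γ : ℝ := if h : P.Nonempty then P.inf' h
      (fun p => ‖ζa p.1 - ζa p.2‖ - 2*dd) else 1 with hγ
  have hadj_of_close : ∀ k m : Fin n, ‖ζa k - ζa m‖ ≤ 2*dd → G.Reachable k m := by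
    intro k m hle
    by_cases hkm : k = m
    · subst hkm; rfl
    · exact SimpleGraph.Adj.reachable ⟨hkm, hle⟩
  have hγpos : 0 < γ := by
    rw [hγ]
    split_ifs with h
    · rw [Finset.lt_inf'_iff]
      rintro ⟨k, m⟩ hkm
      rw [hP, Finset.mem_filter] at hkm
      have hnr := hkm.2
      have : ¬ ‖ζa k - ζa m‖ ≤ 2*dd := fun hle => hnr (hadj_of_close k m hle)
      push_neg at this
      simpa using this
    · norm_num
  have hγle : ∀ k m : Fin n, ¬ G.Reachable k m → γ ≤ ‖ζa k - ζa m‖ - 2*dd := by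
    intro k m hnr
    have hmem : (k, m) ∈ P := by rw [hP, Finset.mem_filter]; exact ⟨Finset.mem_univ _, hnr⟩
    rw [hγ, dif_pos ⟨(k,m), hmem⟩]
    exact Finset.inf'_le _ hmem
  -- the homotopy
  set cs : ℝ → Fin n → ℂ := fun s i => (1 - (s:ℂ)) * a i + (s:ℂ) * b i with hcs
  have hcs0 : cs 0 = a := by funext i; simp [hcs]
  have hcs1 : cs 1 = b := by funext i; simp [hcs]
  have hcsb : ∀ s : ℝ, s ∈ Set.Icc (0:ℝ) 1 → ∀ i, ‖cs s i‖ ≤ C := by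
    rintro s ⟨hs0, hs1⟩ i
    have h1 : ‖(1 - (s:ℂ)) * a i‖ ≤ (1 - s) * C := by
      rw [norm_mul]
      have : ‖1 - (s:ℂ)‖ = 1 - s := by
        rw [show (1 - (s:ℂ)) = (((1 - s : ℝ)) : ℂ) by push_cast; ring,
          Complex.norm_real, Real.norm_eq_abs, abs_of_nonneg (by linarith)]
      rw [this]
      exact mul_le_mul_of_nonneg_left (ha i) (by linarith)
    have h2 : ‖(s:ℂ) * b i‖ ≤ s * C := by
      rw [norm_mul, Complex.norm_real, Real.norm_eq_abs, abs_of_nonneg hs0]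
      exact mul_le_mul_of_nonneg_left (hb i) hs0
    calc ‖cs s i‖ ≤ ‖(1 - (s:ℂ)) * a i‖ + ‖(s:ℂ) * b i‖ :=
          norm_add_le _ _
      _ ≤ (1 - s) * C + s * C := add_le_add h1 h2
      _ = C := by ring
  have hcsd : ∀ s : ℝ, s ∈ Set.Icc (0:ℝ) 1 → ∀ i, ‖a i - cs s i‖ ≤ εhat := by
    rintro s ⟨hs0, hs1⟩ i
    have : a i - cs s i = (s:ℂ) * (a i - b i) := by rw [hcs]; ring
    rw [this, norm_mul, Complex.norm_real, Real.norm_eq_abs, abs_of_nonneg hs0]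
    calc s * ‖a i - b i‖ ≤ 1 * εhat := by
          apply mul_le_mul hs1 (hεle i) (norm_nonneg _) zero_le_one
      _ = εhat := one_mul _
  -- fact A : roots along the homotopy are within dd of the ζa
  have factA : ∀ s : ℝ, s ∈ Set.Icc (0:ℝ) 1 → ∀ z : ℂ, hcr_pe n (cs s) z = 0 →
      ∃ m, ‖z - ζa m‖ ≤ dd := by
    intro s hs z hz
    obtain ⟨m, hm⟩ := hcr_close_root hn hC1 ha (hcsb s hs) hPa' (hcsd s hs) hz
    exact ⟨m, by rwa [← hdd] at hm⟩
  -- the invariant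
  set Inv : ℝ → Prop := fun s => ∃ q : Fin n → ℂ,
      (∀ t : ℂ, hcr_pe n (cs s) t = ∏ j : Fin n, (t - q j)) ∧
      ∃ σ : Equiv.Perm (Fin n), ∀ j, ∃ k, G.Reachable j k ∧
        ‖q (σ j) - ζa k‖ ≤ dd with hInv
  -- transfer of the invariant along a γ/2-matching
  have transfer : ∀ (u v : Fin n → ℂ), (∀ j, ∃ m, ‖v j - ζa m‖ ≤ dd) →
      ∀ (τ : Equiv.Perm (Fin n)), (∀ j, ‖u j - v (τ j)‖ ≤ γ/2) →
      ∀ (σ : Equiv.Perm (Fin n)), (∀ j, ∃ k, G.Reachable j k ∧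
        ‖u (σ j) - ζa k‖ ≤ dd) →
      ∀ j, ∃ k, G.Reachable j k ∧ ‖v (τ (σ j)) - ζa k‖ ≤ dd := by
    intro u v hv τ hmatch σ hσ j
    obtain ⟨k, hk, habs⟩ := hσ j
    obtain ⟨m, hm⟩ := hv (τ (σ j))
    refine ⟨m, ?_, hm⟩
    have hreach : G.Reachable k m := by
      by_contra hnr
      have h1 := hγle k m hnr
      have h2 : ‖ζa k - ζa m‖ ≤ dd + γ/2 + dd := by
        calc ‖ζa k - ζa m‖
            ≤ ‖ζa k - u (σ j)‖ + ‖u (σ j) - ζa m‖ :=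
              norm_sub_le_norm_sub_add_norm_sub _ _ _
          _ ≤ ‖ζa k - u (σ j)‖ + (‖u (σ j) - v (τ (σ j))‖
              + ‖v (τ (σ j)) - ζa m‖) := by
                have := norm_sub_le_norm_sub_add_norm_sub (u (σ j)) (v (τ (σ j))) (ζa m)
                linarith
          _ ≤ dd + (γ/2 + dd) := by
                have h3 : ‖ζa k - u (σ j)‖ = ‖u (σ j) - ζa k‖ :=
                  norm_sub_rev _ _
                rw [h3]
                exact add_le_add habs (add_le_add (hmatch (σ j)) hm)
          _ = dd + γ/2 + dd := by ring
      linarith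
    exact hk.trans hreach
  -- the set where the invariant holds
  haveI : PreconnectedSpace (Set.Icc (0:ℝ) 1) := Subtype.preconnectedSpace isPreconnected_Icc
  set S : Set (Set.Icc (0:ℝ) 1) := {s | Inv s.1} with hS
  -- local constancy
  have key : ∀ s0 : Set.Icc (0:ℝ) 1, ∃ δ > 0, ∀ s : Set.Icc (0:ℝ) 1,
      |s.1 - s0.1| < δ → (Inv s.1 ↔ Inv s0.1) := by
    intro s0
    obtain ⟨q0, hq0⟩ := hcr_root_tuple_exists hn (cs s0.1)
    obtain ⟨η, hη, hcomp⟩ := hcr_compactness hn (cs s0.1) q0 hq0 (half_pos hγpos)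
    refine ⟨η / (2*C+1), by positivity, fun s hs => ?_⟩
    have hcoef : ∀ i, ‖cs s.1 i - cs s0.1 i‖ ≤ η := by
      intro i
      have heq : cs s.1 i - cs s0.1 i = ((s.1 - s0.1 : ℝ) : ℂ) * (b i - a i) := by
        rw [hcs]; push_cast; ring
      rw [heq, norm_mul, Complex.norm_real, Real.norm_eq_abs]
      have h1 : ‖b i - a i‖ ≤ 2*C := by
        calc ‖b i - a i‖ ≤ ‖b i‖ + ‖a i‖ := by
              simpa [sub_eq_add_neg] using norm_add_le (b i) (-(a i))
          _ ≤ 2*C := by linarith [ha i, hb i]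
      calc |s.1 - s0.1| * ‖b i - a i‖ ≤ (η / (2*C+1)) * (2*C) := by
            apply mul_le_mul (le_of_lt hs) h1 (norm_nonneg _) (by positivity)
        _ ≤ η := by
            rw [div_mul_eq_mul_div, div_le_iff₀ (by linarith)]
            nlinarith
    constructor
    · -- Inv s → Inv s0
      rintro ⟨q, hq, σ, hσ⟩
      obtain ⟨τ, hτ⟩ := hcomp (cs s.1) q hcoef hq
      refine ⟨q0, hq0, σ.trans τ⁻¹, ?_⟩
      have hmatch : ∀ j, ‖q j - q0 (τ⁻¹ j)‖ ≤ γ/2 := by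
        intro j
        have := hτ (τ⁻¹ j)
        rw [show τ (τ⁻¹ j) = j from τ.apply_symm_apply j] at this
        rwa [norm_sub_rev]
      have hv : ∀ j, ∃ m, ‖q0 j - ζa m‖ ≤ dd :=
        fun j => factA s0.1 s0.2 (q0 j) (hcr_root_zero hq0 j)
      exact transfer q q0 hv τ⁻¹ hmatch σ hσ
    · -- Inv s0 → Inv s
      rintro ⟨q0', hq0', σ0, hσ0⟩
      -- relate q0' to q0
      obtain ⟨ρ, hρ⟩ := hcr_perm_of_prod_eq q0' q0 (fun t => by rw [← hq0' t, hq0 t])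
      obtain ⟨q, hq⟩ := hcr_root_tuple_exists hn (cs s.1)
      obtain ⟨τ, hτ⟩ := hcomp (cs s.1) q hcoef hq
      refine ⟨q, hq, (σ0.trans ρ).trans τ, ?_⟩
      have hσ0' : ∀ j, ∃ k, G.Reachable j k ∧ ‖q0 (ρ (σ0 j)) - ζa k‖ ≤ dd := by
        intro j
        obtain ⟨k, hk, habs⟩ := hσ0 j
        exact ⟨k, hk, by rwa [← hρ (σ0 j)]⟩
      have hv : ∀ j, ∃ m, ‖q j - ζa m‖ ≤ dd :=
        fun j => factA s.1 s.2 (q j) (hcr_root_zero hq j)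
      exact transfer q0 q hv τ hτ (σ0.trans ρ) hσ0'
  -- S is clopen and nonempty, hence everything
  have hopen : IsOpen S := by
    rw [Metric.isOpen_iff]
    intro s0 hs0
    obtain ⟨δ, hδ, hiff⟩ := key s0
    refine ⟨δ, hδ, fun s hs => ?_⟩
    rw [Metric.mem_ball, Subtype.dist_eq, Real.dist_eq] at hs
    exact (hiff s hs).mpr hs0
  have hclosed : IsClosed S := by
    rw [← isOpen_compl_iff, Metric.isOpen_iff]
    intro s0 hs0
    obtain ⟨δ, hδ, hiff⟩ := key s0
    refine ⟨δ, hδ, fun s hs => ?_⟩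
    rw [Metric.mem_ball, Subtype.dist_eq, Real.dist_eq] at hs
    exact fun hmem => hs0 ((hiff s hs).mp hmem)
  have hne : S.Nonempty := by
    refine ⟨⟨0, by norm_num, by norm_num⟩, ?_⟩
    rw [hS]
    refine ⟨ζa, by rw [hcs0]; exact hPa', 1, fun j => ⟨j, ?_, by simp [hd0]⟩⟩
    rfl
  have hall : S = Set.univ := IsClopen.eq_univ ⟨hclosed, hopen⟩ hne
  have hInv1 : Inv 1 := by
    have : (⟨1, by norm_num, by norm_num⟩ : Set.Icc (0:ℝ) 1) ∈ S := by rw [hall]; trivial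
    exact this
  -- extract the final permutation
  obtain ⟨q, hq, σ, hσ⟩ := hInv1
  have hqb : ∀ t : ℂ, ∏ j : Fin n, (t - q j) = ∏ j : Fin n, (t - ζb j) := by
    intro t
    rw [← hq t, hcs1]
    exact hPb' t
  obtain ⟨ρ, hρ⟩ := hcr_perm_of_prod_eq q ζb hqb
  refine ⟨σ.trans ρ, fun j => ?_⟩
  obtain ⟨k, hk, habs⟩ := hσ j
  have h1 : ‖ζa j - ζa k‖ ≤ ((n:ℝ) - 1) * (2*dd) := hdiam j k hk
  have h2 : ‖ζa j - ζb ((σ.trans ρ) j)‖ ≤ ((n:ℝ)-1) * (2*dd) + dd := by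
    have heq : ζb ((σ.trans ρ) j) = q (σ j) := (hρ (σ j)).symm
    rw [Equiv.trans_apply] at heq ⊢
    rw [heq]
    calc ‖ζa j - q (σ j)‖
        ≤ ‖ζa j - ζa k‖ + ‖ζa k - q (σ j)‖ := norm_sub_le_norm_sub_add_norm_sub _ _ _
      _ ≤ ((n:ℝ)-1) * (2*dd) + dd := by
          rw [norm_sub_rev (ζa k)]
          exact add_le_add h1 habs
  have h3 : ((n:ℝ)-1) * (2*dd) + dd ≤ 4 * n * C * εhat ^ ((1:ℝ)/n) := by
    have hn1 : (1:ℝ) ≤ (n:ℝ) := by exact_mod_cast hn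
    have hX : 0 ≤ εhat ^ ((1:ℝ)/n) := Real.rpow_nonneg hε0 _
    rw [hdd]
    nlinarith [mul_nonneg (by linarith : (0:ℝ) ≤ (n:ℝ)) hX]
  exact le_trans h2 h3
end

section
/- Let K ⊂ ℂ^m be compact, n ≥ 1, and let F(x,t) = t^n + a_1(x)t^(n−1) + ⋯ + a_n(x) and G(x,t) = t^n + b_1(x)t^(n−1) + ⋯ + b_n(x) with a_j, b_j : K → ℂ continuous. Suppose C > 1 satisfies max_j ‖a_j‖_K ≤ C and max_j ‖b_j‖_K ≤ C. Then for every x ∈ K, the Hausdorff distance between the zero sets {t : F(x,t)=0} and {t : G(x,t)=0} is at most 4nC·(max_j |a_j(x) − b_j(x)|)^(1/n). -/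
open Metric Set Finset Polynomial


lemma rootBound_aux (n : ℕ) (hn : 1 ≤ n) (C : ℝ) (hC : 1 < C) (u : Fin n → ℂ)
    (huC : ∀ j, ‖u j‖ ≤ C) (t : ℂ)
    (ht : t ^ n + ∑ j : Fin n, u j * t ^ (n - 1 - (j : ℕ)) = 0) :
    ‖t‖ ≤ 2 * C := by
  by_contra h
  push_neg at h
  set T := ‖t‖ with hT
  have hT2 : 2 < T := by nlinarith
  have hTpos : 0 < T := by linarith
  have h1 : T ^ n ≤ C * ((T ^ n - 1) / (T - 1)) := by
    have he : t ^ n = -∑ j : Fin n, u j * t ^ (n - 1 - (j : ℕ)) := by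
      linear_combination ht
    have h2 : T ^ n ≤ ∑ j : Fin n, C * T ^ (n - 1 - (j : ℕ)) := by
      calc T ^ n = ‖t ^ n‖ := by rw [norm_pow]
        _ = ‖∑ j : Fin n, u j * t ^ (n - 1 - (j : ℕ))‖ := by
            rw [he, norm_neg]
        _ ≤ ∑ j : Fin n, ‖u j * t ^ (n - 1 - (j : ℕ))‖ := by
            exact norm_sum_le _ _
        _ ≤ ∑ j : Fin n, C * T ^ (n - 1 - (j : ℕ)) := by
            apply Finset.sum_le_sum
            intro j _
            rw [norm_mul, norm_pow]
            exact mul_le_mul_of_nonneg_right (huC j) (by positivity)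
    have h3 : ∑ j : Fin n, C * T ^ (n - 1 - (j : ℕ)) = C * ((T ^ n - 1) / (T - 1)) := by
      rw [← Finset.mul_sum]
      congr 1
      rw [Fin.sum_univ_eq_sum_range (fun j => T ^ (n - 1 - j)) n,
        Finset.sum_range_reflect (fun j => T ^ j) n, geom_sum_eq (by linarith) n]
    linarith [h2, h3.symm.le, h3.le]
  have h4 : T ^ n * (T - 1) ≤ C * (T ^ n - 1) := by
    rw [mul_div_assoc'] at h1
    exact (le_div_iff₀ (by linarith)).mp h1
  have h5 : (0:ℝ) < T ^ n := pow_pos hTpos n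
  nlinarith [h4, h5, mul_lt_mul_of_pos_left h (show (0:ℝ) < T^n from h5)]


lemma key_aux (n : ℕ) (hn : 1 ≤ n) (C : ℝ) (hC : 1 < C) (u v : Fin n → ℂ)
    (huC : ∀ j, ‖u j‖ ≤ C) (hvC : ∀ j, ‖v j‖ ≤ C)
    (ε : ℝ) (hε : ∀ j, ‖u j - v j‖ ≤ ε)
    (t : ℂ) (ht : t ^ n + ∑ j : Fin n, u j * t ^ (n - 1 - (j : ℕ)) = 0) :
    ∃ s : ℂ, s ^ n + ∑ j : Fin n, v j * s ^ (n - 1 - (j : ℕ)) = 0 ∧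
      dist t s ≤ 4 * n * C * ε ^ ((1:ℝ) / n) := by
  have hn0 : n ≠ 0 := by omega
  set Q : Polynomial ℂ :=
    X ^ n + ∑ j : Fin n, Polynomial.C (v j) * X ^ (n - 1 - (j : ℕ)) with hQ
  have hdeg : (∑ j : Fin n, Polynomial.C (v j) * X ^ (n - 1 - (j : ℕ))).degree < (n : WithBot ℕ) := by
    apply lt_of_le_of_lt (Polynomial.degree_sum_le _ _)
    rw [Finset.sup_lt_iff (by exact_mod_cast WithBot.bot_lt_coe n)]
    intro j _
    apply lt_of_le_of_lt (Polynomial.degree_C_mul_X_pow_le _ _)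
    exact_mod_cast (show (n - 1 - (j : ℕ)) < n by omega)
  have hQmonic : Q.Monic := Polynomial.monic_X_pow_add hdeg
  have hQdeg : Q.natDegree = n := by
    have : Q.degree = n := by
      rw [hQ, Polynomial.degree_add_eq_left_of_degree_lt (by
        rwa [Polynomial.degree_X_pow]), Polynomial.degree_X_pow]
    exact Polynomial.natDegree_eq_of_degree_eq_some this
  have hcard : Multiset.card Q.roots = n := by
    rw [← hQdeg]
    exact (Polynomial.splits_iff_card_roots.mp (IsAlgClosed.splits Q))
  have heval : ∀ s : ℂ, Q.eval s = s ^ n + ∑ j : Fin n, v j * s ^ (n - 1 - (j : ℕ)) := by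
    intro s
    simp [hQ, Polynomial.eval_finset_sum]
  have hfact : (Q.roots.map fun r => X - Polynomial.C r).prod = Q :=
    Polynomial.prod_multiset_X_sub_C_of_monic_of_roots_card_eq hQmonic (by rw [hcard, hQdeg])
  have hprod : ∀ s : ℂ, Q.eval s = (Q.roots.map fun r => s - r).prod := by
    intro s
    conv_lhs => rw [← hfact]
    rw [Polynomial.eval_multiset_prod, Multiset.map_map]
    congr 1
    ext r
    simp
  -- choose nearest root
  have hne : Q.roots.toFinset.Nonempty := by
    rw [Multiset.toFinset_nonempty]
    intro h0
    rw [h0] at hcard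
    simp at hcard
    omega
  obtain ⟨r, hrmem, hrmin⟩ :=
    Q.roots.toFinset.exists_min_image (fun r => ‖t - r‖₊) hne
  have hrroot : Q.eval r = 0 :=
    (Polynomial.isRoot_of_mem_roots (Multiset.mem_toFinset.mp hrmem))
  refine ⟨r, by rw [← heval]; exact hrroot, ?_⟩
  -- ‖t - r‖ ^ n ≤ ‖Q.eval t‖
  have hpow : ‖t - r‖₊ ^ n ≤ ‖Q.eval t‖₊ := by
    rw [hprod t]
    have hnn : ‖(Multiset.map (fun r => t - r) Q.roots).prod‖₊
        = (Multiset.map (fun r' => ‖t - r'‖₊) Q.roots).prod := by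
      rw [show (Multiset.map (fun r' => ‖t - r'‖₊) Q.roots)
          = (Multiset.map (fun r => t - r) Q.roots).map
              (nnnormHom.toMonoidHom : ℂ →* NNReal) from by
        rw [Multiset.map_map]; rfl, Multiset.prod_hom]
      rfl
    rw [hnn]
    have := Multiset.pow_card_le_prod
      (s := Q.roots.map fun r' => ‖t - r'‖₊) (a := ‖t - r‖₊) ?_
    · rwa [Multiset.card_map, hcard] at this
    · intro x hx
      obtain ⟨r', hr', rfl⟩ := Multiset.mem_map.mp hx
      exact hrmin r' (Multiset.mem_toFinset.mpr hr')
  have hpowR : ‖t - r‖ ^ n ≤ ‖Q.eval t‖ := by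
    have := hpow
    rw [← NNReal.coe_le_coe] at this
    simpa using this
  -- bound on ε
  have hε0 : 0 ≤ ε := le_trans (norm_nonneg _) (hε ⟨0, hn⟩)
  have htle : ‖t‖ ≤ 2 * C := rootBound_aux n hn C hC u huC t ht
  -- Q.eval t = ∑ (v j - u j) t^..
  have h2 : Q.eval t = ∑ j : Fin n, (v j - u j) * t ^ (n - 1 - (j : ℕ)) := by
    rw [heval t]
    rw [show (∑ j : Fin n, (v j - u j) * t ^ (n - 1 - (j : ℕ)))
        = (∑ j : Fin n, v j * t ^ (n - 1 - (j : ℕ)))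
          - (∑ j : Fin n, u j * t ^ (n - 1 - (j : ℕ))) by
      rw [← Finset.sum_sub_distrib]; congr 1; ext j; ring]
    linear_combination ht
  have hA : ‖Q.eval t‖ ≤ n * ε * (2 * C) ^ (n - 1) := by
    rw [h2]
    calc ‖∑ j : Fin n, (v j - u j) * t ^ (n - 1 - (j : ℕ))‖
        ≤ ∑ j : Fin n, ‖(v j - u j) * t ^ (n - 1 - (j : ℕ))‖ :=
          norm_sum_le _ _
      _ ≤ ∑ _j : Fin n, ε * (2 * C) ^ (n - 1) := by
          apply Finset.sum_le_sum
          intro j _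
          rw [norm_mul, norm_pow]
          apply mul_le_mul
          · rw [norm_sub_rev]; exact hε j
          · calc ‖t‖ ^ (n - 1 - (j : ℕ)) ≤ (2 * C) ^ (n - 1 - (j : ℕ)) :=
                pow_le_pow_left₀ (norm_nonneg t) htle _
              _ ≤ (2 * C) ^ (n - 1) := pow_le_pow_right₀ (by linarith) (by omega)
          · positivity
          · exact hε0
      _ = n * ε * (2 * C) ^ (n - 1) := by
          rw [Finset.sum_const, Finset.card_univ, Fintype.card_fin, nsmul_eq_mul]
          ring
  -- put together via rpow
  have hD0 : 0 ≤ ‖t - r‖ := norm_nonneg _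
  have hkey : ‖t - r‖ ≤ (↑n * ε * (2 * C) ^ (n - 1)) ^ ((1:ℝ) / n) := by
    have h3 : ‖t - r‖ ^ n ≤ ↑n * ε * (2 * C) ^ (n - 1) := le_trans hpowR hA
    calc ‖t - r‖ = (‖t - r‖ ^ n) ^ ((n:ℝ)⁻¹) :=
          (Real.pow_rpow_inv_natCast hD0 hn0).symm
      _ ≤ (↑n * ε * (2 * C) ^ (n - 1)) ^ ((n:ℝ)⁻¹) :=
          Real.rpow_le_rpow (by positivity) h3 (by positivity)
      _ = (↑n * ε * (2 * C) ^ (n - 1)) ^ ((1:ℝ) / n) := by rw [one_div]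
  have hsplit : (↑n * ε * (2 * C) ^ (n - 1)) ^ ((1:ℝ) / n)
      = (n : ℝ) ^ ((1:ℝ) / n) * ε ^ ((1:ℝ) / n) * ((2 * C) ^ (n - 1) : ℝ) ^ ((1:ℝ) / n) := by
    rw [Real.mul_rpow (by positivity) (by positivity),
      Real.mul_rpow (by positivity) hε0]
  have hb1 : (n : ℝ) ^ ((1:ℝ) / n) ≤ 2 := by
    calc (n : ℝ) ^ ((1:ℝ) / n) ≤ ((2:ℝ) ^ n) ^ ((1:ℝ) / n) := by
          apply Real.rpow_le_rpow (by positivity) _ (by positivity)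
          exact_mod_cast (Nat.lt_two_pow_self).le
      _ = 2 := by rw [one_div]; exact Real.pow_rpow_inv_natCast (by norm_num) hn0
  have hb3 : ((2 * C) ^ (n - 1) : ℝ) ^ ((1:ℝ) / n) ≤ 2 * C := by
    rw [← Real.rpow_natCast (2 * C) (n - 1), ← Real.rpow_mul (by linarith)]
    calc (2 * C) ^ (((n - 1 : ℕ) : ℝ) * (1 / n)) ≤ (2 * C) ^ (1:ℝ) := by
          apply Real.rpow_le_rpow_of_exponent_le (by linarith)
          rw [mul_one_div, div_le_one (by positivity)]
          exact_mod_cast Nat.sub_le n 1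
      _ = 2 * C := Real.rpow_one _
  have hεr : 0 ≤ ε ^ ((1:ℝ) / n) := Real.rpow_nonneg hε0 _
  have hfin : (↑n * ε * (2 * C) ^ (n - 1)) ^ ((1:ℝ) / n) ≤ 4 * n * C * ε ^ ((1:ℝ) / n) := by
    rw [hsplit]
    have hn1 : (1:ℝ) ≤ n := by exact_mod_cast hn
    calc (n : ℝ) ^ ((1:ℝ) / n) * ε ^ ((1:ℝ) / n) * ((2 * C) ^ (n - 1) : ℝ) ^ ((1:ℝ) / n)
        ≤ 2 * ε ^ ((1:ℝ) / n) * (2 * C) := by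
          apply mul_le_mul (mul_le_mul hb1 le_rfl hεr (by norm_num)) hb3
            (by positivity) (by positivity)
      _ = 4 * C * ε ^ ((1:ℝ) / n) := by ring
      _ ≤ 4 * n * C * ε ^ ((1:ℝ) / n) := by
          apply mul_le_mul_of_nonneg_right _ hεr
          nlinarith
  rw [dist_eq_norm]
  exact le_trans hkey hfin

theorem hausdorffDist_zero_sets_of_monic
    (m n : ℕ) (hn : 1 ≤ n) (K : Set (EuclideanSpace ℂ (Fin m)))
    (hK : IsCompact K) (hKne : K.Nonempty) (C : ℝ) (hC : 1 < C)
    (a b : Fin n → EuclideanSpace ℂ (Fin m) → ℂ)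
    (ha : ∀ j, ContinuousOn (a j) K) (hb : ∀ j, ContinuousOn (b j) K)
    (haC : ∀ j, ∀ x ∈ K, ‖a j x‖ ≤ C)
    (hbC : ∀ j, ∀ x ∈ K, ‖b j x‖ ≤ C) :
    ∀ x ∈ K,
      hausdorffDist
        {t : ℂ | t ^ n + ∑ j : Fin n, a j x * t ^ (n - 1 - (j : ℕ)) = 0}
        {t : ℂ | t ^ n + ∑ j : Fin n, b j x * t ^ (n - 1 - (j : ℕ)) = 0} ≤
      4 * n * C *
        (Finset.univ.sup' (Finset.univ_nonempty_iff.mpr ⟨⟨0, hn⟩⟩)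
          (fun j : Fin n => ‖a j x - b j x‖)) ^ ((1:ℝ) / n) := by
  intro x hx
  set ε := Finset.univ.sup' (Finset.univ_nonempty_iff.mpr ⟨⟨0, hn⟩⟩)
      (fun j : Fin n => ‖a j x - b j x‖) with hεdef
  have hεle : ∀ j : Fin n, ‖a j x - b j x‖ ≤ ε := by
    intro j
    rw [hεdef]
    exact Finset.le_sup' (fun j : Fin n => ‖a j x - b j x‖)
      (Finset.mem_univ j)
  have hε0 : 0 ≤ ε := le_trans (norm_nonneg _) (hεle ⟨0, hn⟩)
  have hr0 : 0 ≤ 4 * n * C * ε ^ ((1:ℝ) / n) := by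
    have := Real.rpow_nonneg hε0 ((1:ℝ) / n)
    have hn1 : (1:ℝ) ≤ n := by exact_mod_cast hn
    positivity
  apply hausdorffDist_le_of_mem_dist hr0
  · intro t htm
    obtain ⟨s, hs, hd⟩ := key_aux n hn C hC (fun j => a j x) (fun j => b j x)
      (fun j => haC j x hx) (fun j => hbC j x hx) ε hεle t htm
    exact ⟨s, hs, hd⟩
  · intro t htm
    obtain ⟨s, hs, hd⟩ := key_aux n hn C hC (fun j => b j x) (fun j => a j x)
      (fun j => hbC j x hx) (fun j => haC j x hx) ε
      (fun j => by rw [norm_sub_rev]; exact hεle j) t htm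
    exact ⟨s, hs, hd⟩
end
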